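/- arXiv:1503.03742 — 2 statements merged into one kernel-verified Lean document; each statement's English description precedes it below -/
import Mathlib

section
/- Assume {(a_i,u_i)}_{i=1}^n is superincreasing and let θ be the greedy solution of K. Then θ ∈ K and ∑_{i=1}^n a_i θ_i = max{∑_{i=1}^n a_i x_i : x ∈ K} (θ is a maximal packing of K). Moreover, θ is the unique point of K attaining this maximum if and only if for every j ∈ {1,…,n} with a_j = ∑_{i=1}^{j−1} a_i u_i and θ_j > 0 there exists i < j with θ_i > 0. -/
private lemma sum_split' {n : ℕ} (f : Fin n → ℤ) (j : Fin n) :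
    ∑ i, f i = (∑ i ∈ Finset.Iio j, f i) + f j + ∑ i ∈ Finset.Ioi j, f i := by
  have h2 : (Finset.univ : Finset (Fin n)) = Finset.Iio j ∪ Finset.Ici j := by
    ext k; simp [le_or_gt, lt_or_ge]
  have hd : Disjoint (Finset.Iio j) (Finset.Ici j) := by
    rw [Finset.disjoint_left]
    intro k hk hk'
    exact absurd (Finset.mem_Ici.mp hk') (not_le.mpr (Finset.mem_Iio.mp hk))
  rw [h2, Finset.sum_union hd, ← Finset.Ioi_insert j, Finset.sum_insert (by simp)]
  ring

/-- the greedy solution `θ` of a superincreasing knapsack belongs to `K` and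
is a maximal packing; it is the unique maximal packing iff for every `j` with
`a j = ∑_{i<j} a i * u i` and `θ j > 0` there is some `i < j` with `θ i > 0`. -/
theorem stmt_3 {n : ℕ} (hn : 1 ≤ n)
    (a u : Fin n → ℤ) (ha : ∀ i, 0 < a i) (hu : ∀ i, 1 ≤ u i)
    (b : ℤ) (hb : 0 < b)
    (hsi : ∀ i j : Fin n, (j : ℕ) = (i : ℕ) + 1 →
      ∑ k ∈ Finset.Iic i, a k * u k ≤ a j)
    (θ : Fin n → ℤ)
    (hθ : ∀ i : Fin n,
      θ i = min (u i) ((b - ∑ k ∈ Finset.Ioi i, a k * θ k).fdiv (a i))) :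
    ((∀ i, 0 ≤ θ i ∧ θ i ≤ u i) ∧ ∑ i, a i * θ i ≤ b) ∧
    (∀ x : Fin n → ℤ, (∀ i, 0 ≤ x i ∧ x i ≤ u i) → ∑ i, a i * x i ≤ b →
      ∑ i, a i * x i ≤ ∑ i, a i * θ i) ∧
    ((∀ x : Fin n → ℤ, (∀ i, 0 ≤ x i ∧ x i ≤ u i) → ∑ i, a i * x i ≤ b →
        ∑ i, a i * x i = ∑ i, a i * θ i → x = θ) ↔
      (∀ j : Fin n, a j = ∑ i ∈ Finset.Iio j, a i * u i → 0 < θ j →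
        ∃ i, i < j ∧ 0 < θ i)) := by
  classical
  set S : Fin n → ℤ := fun i => ∑ k ∈ Finset.Ioi i, a k * θ k with hSdef
  have hθle : ∀ i, θ i ≤ u i := by intro i; rw [hθ i]; exact min_le_left _ _
  have hfdiv : ∀ i, θ i ≤ (b - S i).fdiv (a i) := by
    intro i; rw [hθ i]; exact min_le_right _ _
  have key : ∀ i, a i * θ i ≤ b - S i := by
    intro i
    have h2 : (b - S i).fdiv (a i) = (b - S i) / a i := Int.fdiv_eq_ediv_of_nonneg _ (ha i).le
    calc a i * θ i ≤ a i * ((b - S i).fdiv (a i)) :=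
          mul_le_mul_of_nonneg_left (hfdiv i) (ha i).le
      _ = (b - S i) / a i * a i := by rw [h2]; ring
      _ ≤ b - S i := Int.ediv_mul_le _ (ha i).ne'
  have hIci : ∀ i, ∑ k ∈ Finset.Ici i, a k * θ k ≤ b := by
    intro i
    rw [← Finset.Ioi_insert i, Finset.sum_insert (by simp)]
    have := key i
    simp only [hSdef] at this
    linarith
  have hRnonneg : ∀ i : Fin n, 0 ≤ b - S i := by
    intro i
    have hin := i.isLt
    by_cases hlast : (i : ℕ) + 1 = n
    · have he : Finset.Ioi i = (∅ : Finset (Fin n)) := by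
        ext k; simp only [Finset.mem_Ioi, Finset.notMem_empty, iff_false, not_lt, Fin.le_def]
        have := k.isLt; omega
      simp only [hSdef, he, Finset.sum_empty, sub_zero]
      linarith
    · set j : Fin n := ⟨(i : ℕ) + 1, by omega⟩ with hj
      have hIoi : Finset.Ioi i = Finset.Ici j := by
        ext k; simp only [Finset.mem_Ioi, Finset.mem_Ici, Fin.lt_def, Fin.le_def, hj]; omega
      have := hIci j
      simp only [hSdef, hIoi]
      linarith
  have hθ0 : ∀ i, 0 ≤ θ i := by
    intro i
    rw [hθ i]
    refine le_min (by linarith [hu i]) ?_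
    rw [Int.fdiv_eq_ediv_of_nonneg _ (ha i).le]
    exact Int.ediv_nonneg (hRnonneg i) (ha i).le
  have hbudget : ∑ i, a i * θ i ≤ b := by
    have hz : Finset.Ici (⟨0, hn⟩ : Fin n) = Finset.univ := by
      ext k; simp [Fin.le_def]
    have := hIci ⟨0, hn⟩
    rwa [hz] at this
  have hsi' : ∀ j : Fin n, ∑ k ∈ Finset.Iio j, a k * u k ≤ a j := by
    intro j
    have hjn := j.isLt
    rcases Nat.eq_zero_or_pos (j : ℕ) with h0 | hpos
    · have he : Finset.Iio j = (∅ : Finset (Fin n)) := by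
        ext k; simp only [Finset.mem_Iio, Finset.notMem_empty, iff_false, not_lt, Fin.le_def]
        omega
      rw [he, Finset.sum_empty]; exact (ha j).le
    · set i : Fin n := ⟨(j : ℕ) - 1, by omega⟩ with hi
      have hIio : Finset.Iio j = Finset.Iic i := by
        ext k; simp only [Finset.mem_Iio, Finset.mem_Iic, Fin.lt_def, Fin.le_def, hi]; omega
      rw [hIio]
      exact hsi i j (by simp only [hi]; omega)
  -- Lemma A: at the largest differing index, x is strictly below θ
  have lemA : ∀ x : Fin n → ℤ, (∀ i, 0 ≤ x i ∧ x i ≤ u i) → ∑ i, a i * x i ≤ b →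
      ∀ j : Fin n, (∀ k, j < k → x k = θ k) → x j ≤ θ j := by
    intro x hx hxb j hhi
    by_contra hlt
    push_neg at hlt
    have h1 : θ j < u j := lt_of_lt_of_le hlt (hx j).2
    have h2 : θ j = (b - S j).fdiv (a j) := by
      rcases min_cases (u j) ((b - S j).fdiv (a j)) with ⟨hm, _⟩ | ⟨hm, _⟩
      · rw [hθ j, hm] at h1; exact absurd h1 (lt_irrefl _)
      · rw [hθ j, hm]
    have h3 : b - S j < (θ j + 1) * a j := by
      rw [h2, Int.fdiv_eq_ediv_of_nonneg _ (ha j).le]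
      exact Int.lt_ediv_add_one_mul_self _ (ha j)
    have hxsum : ∑ k ∈ Finset.Ioi j, a k * x k = S j := by
      exact Finset.sum_congr rfl fun k hk => by rw [hhi k (Finset.mem_Ioi.mp hk)]
    have hsplit := sum_split' (fun i => a i * x i) j
    have hfe : (∑ i ∈ Finset.Iio j, a i * x i) + a j * x j ≤ b - S j := by
      rw [hsplit, hxsum] at hxb; linarith
    have h4 : (θ j + 1) * a j ≤ a j * x j := by
      have : θ j + 1 ≤ x j := hlt
      nlinarith [ha j]
    have h5 : (0 : ℤ) ≤ ∑ i ∈ Finset.Iio j, a i * x i :=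
      Finset.sum_nonneg fun i _ => mul_nonneg (ha i).le (hx i).1
    linarith
  -- extraction of the largest differing index
  have largest : ∀ x : Fin n → ℤ, x ≠ θ → ∃ j : Fin n,
      x j ≠ θ j ∧ ∀ k, j < k → x k = θ k := by
    intro x hxe
    have hne : (Finset.univ.filter (fun k => x k ≠ θ k)).Nonempty := by
      obtain ⟨k, hk⟩ := Function.ne_iff.mp hxe
      exact ⟨k, by simp [hk]⟩
    set j := (Finset.univ.filter (fun k => x k ≠ θ k)).max' hne with hjd
    refine ⟨j, ?_, ?_⟩
    · have := Finset.max'_mem _ hne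
      simpa using this
    · intro k hk
      by_contra hne2
      have hkm : k ∈ Finset.univ.filter (fun k => x k ≠ θ k) := by simp [hne2]
      have := Finset.le_max' _ k hkm
      exact absurd (lt_of_lt_of_le hk this) (lt_irrefl _)
  have maxle : ∀ x : Fin n → ℤ, (∀ i, 0 ≤ x i ∧ x i ≤ u i) → ∑ i, a i * x i ≤ b →
      ∑ i, a i * x i ≤ ∑ i, a i * θ i := by
    intro x hx hxb
    by_cases hxe : x = θ
    · rw [hxe]
    · obtain ⟨j, hxj, hhi⟩ := largest x hxe
      have hA : x j ≤ θ j - 1 := by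
        have := lemA x hx hxb j hhi
        omega
      have hxsum : ∑ k ∈ Finset.Ioi j, a k * x k = S j :=
        Finset.sum_congr rfl fun k hk => by rw [hhi k (Finset.mem_Ioi.mp hk)]
      have hIiole : ∑ i ∈ Finset.Iio j, a i * x i ≤ ∑ i ∈ Finset.Iio j, a i * u i :=
        Finset.sum_le_sum fun i _ => mul_le_mul_of_nonneg_left (hx i).2 (ha i).le
      have hIioθ : (0 : ℤ) ≤ ∑ i ∈ Finset.Iio j, a i * θ i :=
        Finset.sum_nonneg fun i _ => mul_nonneg (ha i).le (hθ0 i)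
      have hsx := sum_split' (fun i => a i * x i) j
      have hsθ := sum_split' (fun i => a i * θ i) j
      have hsi'' := hsi' j
      have hj2 : a j * x j ≤ a j * (θ j - 1) := mul_le_mul_of_nonneg_left hA (ha j).le
      simp only [hSdef] at hsθ hsx hxsum ⊢
      rw [hsx, hsθ, hxsum]
      nlinarith [ha j]
  refine ⟨⟨fun i => ⟨hθ0 i, hθle i⟩, hbudget⟩, maxle, ?_⟩
  constructor
  · -- uniqueness → condition
    intro huniq j hja hθj
    by_contra hno
    push_neg at hno
    have hθz : ∀ i, i < j → θ i = 0 := fun i hij => le_antisymm (hno i hij) (hθ0 i)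
    set x : Fin n → ℤ := fun k => if k < j then u k else if k = j then θ j - 1 else θ k with hxd
    have hxb : ∀ i, 0 ≤ x i ∧ x i ≤ u i := by
      intro i
      by_cases h1 : i < j
      · simp only [hxd, if_pos h1]
        exact ⟨by linarith [hu i], le_refl _⟩
      · by_cases h2 : i = j
        · subst h2
          have hxv : x i = θ i - 1 := by simp [hxd, h1]
          rw [hxv]
          exact ⟨by omega, by linarith [hθle i]⟩
        · simp only [hxd, if_neg h1, if_neg h2]
          exact ⟨hθ0 i, hθle i⟩
    have hIiox : ∑ i ∈ Finset.Iio j, a i * x i = ∑ i ∈ Finset.Iio j, a i * u i :=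
      Finset.sum_congr rfl fun i hi => by
        rw [hxd]; simp only [if_pos (Finset.mem_Iio.mp hi)]
    have hIioθ : ∑ i ∈ Finset.Iio j, a i * θ i = 0 :=
      Finset.sum_eq_zero fun i hi => by rw [hθz i (Finset.mem_Iio.mp hi), mul_zero]
    have hIoix : ∑ k ∈ Finset.Ioi j, a k * x k = ∑ k ∈ Finset.Ioi j, a k * θ k :=
      Finset.sum_congr rfl fun k hk => by
        have h1 : ¬ k < j := not_lt.mpr (le_of_lt (Finset.mem_Ioi.mp hk))
        have h2 : k ≠ j := ne_of_gt (Finset.mem_Ioi.mp hk)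
        rw [hxd]; simp only [if_neg h1, if_neg h2]
    have hxj : x j = θ j - 1 := by rw [hxd]; simp
    have hsx := sum_split' (fun i => a i * x i) j
    have hsθ := sum_split' (fun i => a i * θ i) j
    have hsum : ∑ i, a i * x i = ∑ i, a i * θ i := by
      rw [hsx, hsθ, hIiox, hIioθ, hIoix, hxj, ← hja]; ring
    have := huniq x hxb (by rw [hsum]; exact hbudget) hsum
    have : x j = θ j := by rw [this]
    rw [hxj] at this
    omega
  · -- condition → uniqueness
    intro hcond x hx hxb hsum
    by_contra hxe
    obtain ⟨j, hxj, hhi⟩ := largest x hxe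
    have hA : x j ≤ θ j - 1 := by
      have := lemA x hx hxb j hhi
      omega
    have hxsum : ∑ k ∈ Finset.Ioi j, a k * x k = ∑ k ∈ Finset.Ioi j, a k * θ k :=
      Finset.sum_congr rfl fun k hk => by rw [hhi k (Finset.mem_Ioi.mp hk)]
    have hsx := sum_split' (fun i => a i * x i) j
    have hsθ := sum_split' (fun i => a i * θ i) j
    have hE : (∑ i ∈ Finset.Iio j, a i * x i) + a j * x j
        = (∑ i ∈ Finset.Iio j, a i * θ i) + a j * θ j := by
      rw [hsx, hsθ, hxsum] at hsum; linarith
    have hIiole : ∑ i ∈ Finset.Iio j, a i * x i ≤ ∑ i ∈ Finset.Iio j, a i * u i :=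
      Finset.sum_le_sum fun i _ => mul_le_mul_of_nonneg_left (hx i).2 (ha i).le
    have hIioθ : (0 : ℤ) ≤ ∑ i ∈ Finset.Iio j, a i * θ i :=
      Finset.sum_nonneg fun i _ => mul_nonneg (ha i).le (hθ0 i)
    have hsi'' := hsi' j
    have hgap : a j ≤ a j * (θ j - x j) := by nlinarith [ha j]
    -- all inequalities are equalities
    have hθIio0 : ∑ i ∈ Finset.Iio j, a i * θ i = 0 := by nlinarith [ha j]
    have hau : a j = ∑ i ∈ Finset.Iio j, a i * u i := by nlinarith [ha j]
    have hθjpos : 0 < θ j := by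
      have := (hx j).1
      omega
    obtain ⟨i, hij, hθi⟩ := hcond j hau hθjpos
    have : a i * θ i = 0 := by
      have hterm : ∀ k ∈ Finset.Iio j, 0 ≤ a k * θ k :=
        fun k _ => mul_nonneg (ha k).le (hθ0 k)
      exact (Finset.sum_eq_zero_iff_of_nonneg hterm).mp hθIio0 i (Finset.mem_Iio.mpr hij)
    nlinarith [ha i]
end

section
/- Assume {(a_i,u_i)}_{i=1}^n is superincreasing, a_i u_i ≤ b for all i, and ∑_{i=1}^n a_i u_i > b. Then for every j ∈ {1,…,n} with θ_j < u_j there exist n points x¹,…,xⁿ ∈ K that are affinely independent (as points of ℝⁿ) and each satisfies the packing inequality for j with equality: x_j + ∑_{i ∈ I_j} φ_j(i)(x_i − θ_i) = θ_j. Hence the packing inequality for j is facet-defining for conv(K). -/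
/-- Embedding of integer vectors into real vectors. -/
noncomputable def toReal {n : ℕ} (x : Fin n → ℤ) : Fin n → ℝ := fun i => (x i : ℝ)

/-- Telescoping identity: a product minus its base expands as a telescoping sum. -/
private lemma telescope_aux {n : ℕ} (t : Fin n → ℤ) (c : ℤ) (F : Finset (Fin n)) :
    c * ∏ k ∈ F, t k =
      c + ∑ k ∈ F, (c * ∏ k' ∈ F.filter (· < k), t k') * (t k - 1) := by
  induction F using Finset.induction_on_max with
  | empty => simp
  | insert m F hmax ih =>
    have hm : m ∉ F := fun h => absurd (hmax m h) (lt_irrefl m)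
    rw [Finset.prod_insert hm, Finset.sum_insert hm]
    have h1 : (insert m F).filter (· < m) = F := by
      rw [Finset.filter_insert, if_neg (lt_irrefl m), Finset.filter_true_of_mem hmax]
    have h2 : ∀ k ∈ F, ((insert m F).filter (· < k)) = F.filter (· < k) := by
      intro k hk
      rw [Finset.filter_insert, if_neg (not_lt.mpr (hmax k hk).le)]
    rw [Finset.sum_congr rfl (fun k hk => by rw [h2 k hk]), h1]
    linear_combination ih

/-- for every `j` with `θ j < u j` there exist `n` affinely independent
points of the superincreasing knapsack `K`, each satisfying the `j`-th packing
inequality with equality (hence the packing inequality is facet-defining). -/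
theorem stmt_9 {n : ℕ} (hn : 1 ≤ n)
    (a u : Fin n → ℤ) (ha : ∀ i, 0 < a i) (hu : ∀ i, 1 ≤ u i)
    (b : ℤ) (hb : 0 < b)
    (hub : ∀ i, a i * u i ≤ b) (hgt : b < ∑ i, a i * u i)
    (hsi : ∀ i j : Fin n, (j : ℕ) = (i : ℕ) + 1 →
      ∑ k ∈ Finset.Iic i, a k * u k ≤ a j)
    (θ : Fin n → ℤ)
    (hθ : ∀ i : Fin n,
      θ i = min (u i) ((b - ∑ k ∈ Finset.Ioi i, a k * θ k).fdiv (a i)))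
    (φ : Fin n → Fin n → ℤ)
    (hφ : ∀ j i : Fin n, φ j i =
      (u j - θ j) * ∏ k ∈ (Finset.Ioo j i).filter (fun k => 1 ≤ θ k), (u k + 1 - θ k))
    (j : Fin n) (hju : θ j < u j) :
    ∃ p : Fin n → (Fin n → ℤ),
      (∀ m, (∀ i, 0 ≤ p m i ∧ p m i ≤ u i) ∧ ∑ i, a i * p m i ≤ b) ∧
      AffineIndependent ℝ (fun m => toReal (p m)) ∧
      (∀ m, p m j + ∑ i ∈ (Finset.Ioi j).filter (fun i => 1 ≤ θ i),
        φ j i * (p m i - θ i) = θ j) := by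
  classical
  have hθle : ∀ i, θ i ≤ u i := fun i => by rw [hθ i]; exact min_le_left _ _
  have hIoi_empty : ∀ i : Fin n, i.val = n - 1 → Finset.Ioi i = ∅ := by
    intro i hi; ext k
    simp only [Finset.mem_Ioi, Finset.notMem_empty, iff_false, not_lt, Fin.le_def]
    have := k.isLt; omega
  have hIoi_insert : ∀ i i' : Fin n, i'.val = i.val + 1 →
      Finset.Ioi i = insert i' (Finset.Ioi i') := by
    intro i i' h; ext k
    simp only [Finset.mem_Ioi, Finset.mem_insert, Fin.lt_def, Fin.ext_iff]
    omega
  -- step inequality, assuming residual nonneg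
  have hstep : ∀ i : Fin n, 0 ≤ b - ∑ k ∈ Finset.Ioi i, a k * θ k →
      a i * θ i ≤ b - ∑ k ∈ Finset.Ioi i, a k * θ k := by
    intro i hr
    have h1 : θ i ≤ (b - ∑ k ∈ Finset.Ioi i, a k * θ k) / a i := by
      have := hθ i
      rw [Int.fdiv_eq_ediv_of_nonneg _ (ha i).le] at this
      rw [this]; exact min_le_right _ _
    calc a i * θ i = θ i * a i := mul_comm _ _
      _ ≤ ((b - ∑ k ∈ Finset.Ioi i, a k * θ k) / a i) * a i :=
          mul_le_mul_of_nonneg_right h1 (ha i).le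
      _ ≤ _ := Int.ediv_mul_le _ (ha i).ne'
  have hres : ∀ t : ℕ, ∀ i : Fin n, n ≤ i.val + 1 + t →
      0 ≤ b - ∑ k ∈ Finset.Ioi i, a k * θ k := by
    intro t
    induction t with
    | zero =>
      intro i hi
      rw [hIoi_empty i (by have := i.isLt; omega)]
      simpa using hb.le
    | succ t iht =>
      intro i hi
      by_cases hl : n ≤ i.val + 1 + t
      · exact iht i hl
      · have hi1 : i.val + 1 < n := by omega
        have hres' := iht ⟨i.val + 1, hi1⟩ (by simp; omega)
        have hs := hstep ⟨i.val + 1, hi1⟩ hres'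
        rw [hIoi_insert i ⟨i.val + 1, hi1⟩ rfl,
          Finset.sum_insert (by simp [Finset.mem_Ioi])]
        linarith
  have hres0 : ∀ i : Fin n, 0 ≤ b - ∑ k ∈ Finset.Ioi i, a k * θ k :=
    fun i => hres n i (by omega)
  have hθ0 : ∀ i, 0 ≤ θ i := by
    intro i
    rw [hθ i]
    refine le_min (by linarith [hu i]) ?_
    rw [Int.fdiv_eq_ediv_of_nonneg _ (ha i).le]
    exact Int.ediv_nonneg (hres0 i) (ha i).le
  have htot : ∑ k, a k * θ k ≤ b := by
    have h0 : (0 : ℕ) < n := hn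
    have huniv : (Finset.univ : Finset (Fin n)) = insert ⟨0, h0⟩ (Finset.Ioi ⟨0, h0⟩) := by
      ext k
      simp only [Finset.mem_univ, Finset.mem_insert, Finset.mem_Ioi, Fin.lt_def, Fin.ext_iff,
        true_iff]
      omega
    rw [huniv, Finset.sum_insert (by simp [Finset.mem_Ioi])]
    have := hstep ⟨0, h0⟩ (hres0 _)
    have := hres0 (⟨0, h0⟩ : Fin n)
    linarith
  have hLlt : n - 1 < n := by omega
  set L : Fin n := ⟨n - 1, hLlt⟩ with hLdef
  have hθL : θ L = u L := by
    rw [hθ L, hIoi_empty L rfl]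
    simp only [Finset.sum_empty, sub_zero]
    refine min_eq_left ?_
    rw [Int.fdiv_eq_ediv_of_nonneg _ (ha L).le, Int.le_ediv_iff_mul_le (ha L)]
    calc u L * a L = a L * u L := mul_comm _ _
      _ ≤ b := hub L
  have hjL : j < L := by
    have hne : j ≠ L := by
      intro h; rw [h, hθL] at hju; exact absurd hju (lt_irrefl _)
    rw [Fin.lt_def]
    have h1 : j.val < n := j.isLt
    have h2 : j.val ≠ n - 1 := fun h => hne (Fin.ext h)
    simp only [hLdef]
    omega
  -- Definitions
  obtain ⟨F, hF⟩ : ∃ F : Fin n → Finset (Fin n),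
      ∀ i, F i = (Finset.Ioo j i).filter (fun k => 1 ≤ θ k) := ⟨_, fun _ => rfl⟩
  obtain ⟨Ff, hFf⟩ : ∃ Ff : Finset (Fin n),
      Ff = (Finset.Ioi j).filter (fun i => 1 ≤ θ i) := ⟨_, rfl⟩
  obtain ⟨w, hw⟩ : ∃ w : Fin n → Fin n → ℤ, ∀ i k, w i k =
      if k = j then u j else if k ∈ F i then u k else if k = i then θ i - 1 else θ k :=
    ⟨_, fun _ _ => rfl⟩
  obtain ⟨p, hp⟩ : ∃ p : Fin n → Fin n → ℤ, ∀ m k, p m k =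
      if m = j then θ k
      else if θ m ≤ 0 then (if k = m then 1 else w L k)
      else if j < m then w m k
      else if k = m then θ m - 1 else θ k := ⟨_, fun _ _ => rfl⟩
  have hFmem : ∀ i k, k ∈ F i ↔ (j < k ∧ k < i ∧ 1 ≤ θ k) := by
    intro i k; rw [hF]; simp [Finset.mem_Ioo, and_assoc]
  have hFfmem : ∀ k, k ∈ Ff ↔ (j < k ∧ 1 ≤ θ k) := by
    intro k; rw [hFf]; simp
  have hLFf : L ∈ Ff := (hFfmem L).mpr ⟨hjL, by rw [hθL]; exact hu L⟩
  have hFsub : ∀ i, ∀ k, k ∈ F i → k ∈ Ff := by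
    intro i k hk
    obtain ⟨h1, _, h3⟩ := (hFmem i k).mp hk
    exact (hFfmem k).mpr ⟨h1, h3⟩
  have hjFi : ∀ i, j ∉ F i := fun i h => absurd ((hFmem i j).mp h).1 (lt_irrefl j)
  have hiFi : ∀ i, i ∉ F i := fun i h => absurd ((hFmem i i).mp h).2.1 (lt_irrefl i)
  -- w evaluation lemmas
  have hwj : ∀ i, w i j = u j := fun i => by rw [hw]; simp
  have hwsupp : ∀ i k, k ≠ j → k ∉ F i → k ≠ i → w i k = θ k := by
    intro i k h1 h2 h3; rw [hw]; simp [h1, h2, h3]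
  have hwF : ∀ i k, k ∈ F i → w i k = u k := by
    intro i k hk
    have hkj : k ≠ j := (((hFmem i k).mp hk).1).ne'
    rw [hw]; simp [hkj, hk]
  have hwi : ∀ i, j < i → w i i = θ i - 1 := by
    intro i hi
    have h1 : i ≠ j := hi.ne'
    rw [hw]; simp [h1, hiFi i]
  have hwbd : ∀ i, 1 ≤ θ i → ∀ k, 0 ≤ w i k ∧ w i k ≤ u k := by
    intro i hθi k
    rw [hw]
    split_ifs with h1 h2 h3
    · subst h1; exact ⟨by linarith [hu k], le_rfl⟩
    · exact ⟨by linarith [hu k], le_rfl⟩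
    · subst h3; exact ⟨by linarith, by linarith [hθle k]⟩
    · exact ⟨hθ0 k, hθle k⟩
  -- core superincreasing bound
  have hcore : ∀ i : Fin n, 0 < i.val → ∀ E : Finset (Fin n), (∀ k ∈ E, k < i) →
      ∑ k ∈ E, a k * u k ≤ a i := by
    intro i hi E hE
    have hi1 : i.val - 1 < n := by have := i.isLt; omega
    have hsub : E ⊆ Finset.Iic ⟨i.val - 1, hi1⟩ := by
      intro k hk
      simp only [Finset.mem_Iic, Fin.le_def]
      have := hE k hk
      rw [Fin.lt_def] at this
      omega
    calc ∑ k ∈ E, a k * u k ≤ ∑ k ∈ Finset.Iic ⟨i.val - 1, hi1⟩, a k * u k :=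
        Finset.sum_le_sum_of_subset_of_nonneg hsub
          (fun k _ _ => mul_nonneg (ha k).le (by linarith [hu k]))
      _ ≤ a i := hsi _ i (by simp; omega)
  -- sum formula for w
  have hsumw : ∀ i, j < i → 1 ≤ θ i →
      ∑ k, a k * w i k = ∑ k, a k * θ k +
        (a j * (u j - θ j) + ∑ k ∈ F i, a k * (u k - θ k) - a i) := by
    intro i hji hθi
    have hjnotin : j ∉ insert i (F i) := by
      simp only [Finset.mem_insert, not_or]
      exact ⟨hji.ne, hjFi i⟩
    have key : ∑ k, (a k * w i k - a k * θ k)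
        = ∑ k ∈ insert j (insert i (F i)), (a k * w i k - a k * θ k) := by
      refine (Finset.sum_subset (Finset.subset_univ _) ?_).symm
      intro k _ hk
      simp only [Finset.mem_insert, not_or] at hk
      rw [hwsupp i k hk.1 hk.2.2 hk.2.1]
      ring
    have expand : ∑ k ∈ insert j (insert i (F i)), (a k * w i k - a k * θ k)
        = a j * (u j - θ j) + ∑ k ∈ F i, a k * (u k - θ k) - a i := by
      rw [Finset.sum_insert hjnotin, Finset.sum_insert (hiFi i), hwj, hwi i hji]
      have hc : ∑ k ∈ F i, (a k * w i k - a k * θ k) = ∑ k ∈ F i, a k * (u k - θ k) := by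
        refine Finset.sum_congr rfl fun k hk => ?_
        rw [hwF i k hk]; ring
      rw [hc]; ring
    have h1 : ∑ k, a k * w i k - ∑ k, a k * θ k
        = a j * (u j - θ j) + ∑ k ∈ F i, a k * (u k - θ k) - a i := by
      rw [← Finset.sum_sub_distrib, key, expand]
    linarith
  -- budget for w-type points
  have hΔ : ∀ i, j < i → 1 ≤ θ i →
      a j * (u j - θ j) + ∑ k ∈ F i, a k * (u k - θ k) ≤ a i := by
    intro i hji hθi
    have h1 : a j * (u j - θ j) + ∑ k ∈ F i, a k * (u k - θ k)
        ≤ ∑ k ∈ insert j (F i), a k * u k := by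
      rw [Finset.sum_insert (hjFi i)]
      refine add_le_add (mul_le_mul_of_nonneg_left (sub_le_self _ (hθ0 j)) (ha j).le)
        (Finset.sum_le_sum fun k _ =>
          mul_le_mul_of_nonneg_left (sub_le_self _ (hθ0 k)) (ha k).le)
    have h2 : ∑ k ∈ insert j (F i), a k * u k ≤ a i := by
      refine hcore i (by rw [Fin.lt_def] at hji; omega) _ ?_
      intro k hk
      rcases Finset.mem_insert.mp hk with rfl | hk
      · exact hji
      · exact ((hFmem i k).mp hk).2.1
    linarith
  have hbdgF : ∀ i, j < i → 1 ≤ θ i → ∑ k, a k * w i k ≤ b := by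
    intro i hji hθi
    have := hsumw i hji hθi
    have := hΔ i hji hθi
    linarith
  -- zero-type points
  have hwLm : ∀ m, m ≠ j → θ m = 0 → w L m = θ m := by
    intro m h1 h2
    refine hwsupp L m h1 ?_ ?_
    · intro h; have := ((hFmem L m).mp h).2.2; omega
    · intro h; rw [h, hθL] at h2; linarith [hu L]
  have hpzero_eq : ∀ m, m ≠ j → θ m = 0 → ∀ k,
      p m k = w L k + (if k = m then 1 else 0) := by
    intro m h1 h2 k
    rw [hp, if_neg h1, if_pos (by omega : θ m ≤ 0)]
    by_cases hk : k = m
    · subst hk; rw [if_pos rfl, if_pos rfl, hwLm k h1 h2, h2]; norm_num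
    · rw [if_neg hk, if_neg hk, add_zero]
  have hbdg0 : ∀ m, m ≠ j → θ m = 0 → ∑ k, a k * p m k ≤ b := by
    intro m h1 h2
    have hmL : m ≠ L := fun h => by rw [h, hθL] at h2; linarith [hu L]
    have hsum : ∑ k, a k * p m k = ∑ k, a k * w L k + a m := by
      have : ∀ k : Fin n, a k * p m k = a k * w L k + (if k = m then a k else 0) := by
        intro k
        rw [hpzero_eq m h1 h2 k]
        by_cases hk : k = m
        · rw [if_pos hk, if_pos hk]; ring
        · rw [if_neg hk, if_neg hk]; ring
      rw [Finset.sum_congr rfl (fun k _ => this k), Finset.sum_add_distrib,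
        Finset.sum_ite_eq' Finset.univ m (fun k => a k), if_pos (Finset.mem_univ m)]
    have hθLn : (1 : ℤ) ≤ θ L := by rw [hθL]; exact hu L
    have hΔ2 : a j * (u j - θ j) + ∑ k ∈ F L, a k * (u k - θ k) + a m ≤ a L := by
      have hmnotin : m ∉ insert j (F L) := by
        simp only [Finset.mem_insert, not_or]
        refine ⟨h1, fun h => ?_⟩
        have := ((hFmem L m).mp h).2.2; omega
      have h1' : a j * (u j - θ j) + ∑ k ∈ F L, a k * (u k - θ k) + a m
          ≤ ∑ k ∈ insert m (insert j (F L)), a k * u k := by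
        rw [Finset.sum_insert hmnotin, Finset.sum_insert (hjFi L)]
        have hm1 : a m ≤ a m * u m := le_mul_of_one_le_right (ha m).le (hu m)
        have hj1 : a j * (u j - θ j) ≤ a j * u j :=
          mul_le_mul_of_nonneg_left (sub_le_self _ (hθ0 j)) (ha j).le
        have hF1 : ∑ k ∈ F L, a k * (u k - θ k) ≤ ∑ k ∈ F L, a k * u k :=
          Finset.sum_le_sum fun k _ =>
            mul_le_mul_of_nonneg_left (sub_le_self _ (hθ0 k)) (ha k).le
        linarith
      have h2' : ∑ k ∈ insert m (insert j (F L)), a k * u k ≤ a L := by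
        refine hcore L (by rw [Fin.lt_def] at hjL; omega) _ ?_
        intro k hk
        rcases Finset.mem_insert.mp hk with rfl | hk
        · rw [Fin.lt_def]
          have h3 : k.val ≠ n - 1 := fun h => hmL (Fin.ext h)
          have := k.isLt
          simp only [hLdef]
          omega
        rcases Finset.mem_insert.mp hk with rfl | hk
        · exact hjL
        · exact ((hFmem L k).mp hk).2.1
      linarith
    have := hsumw L hjL hθLn
    linarith
  -- packing equality for w-type points
  have heqw : ∀ i, j < i → 1 ≤ θ i →
      w i j + ∑ k ∈ Ff, φ j k * (w i k - θ k) = θ j := by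
    intro i hji hθi
    have hsplit : Ff = insert i (F i ∪ Ff.filter (fun k => i < k)) := by
      ext k
      rw [Finset.mem_insert, Finset.mem_union, Finset.mem_filter, hFfmem k, hFmem i k]
      constructor
      · rintro ⟨h1, h2⟩
        rcases lt_trichotomy k i with h | h | h
        · exact Or.inr (Or.inl ⟨h1, h, h2⟩)
        · exact Or.inl h
        · exact Or.inr (Or.inr ⟨⟨h1, h2⟩, h⟩)
      · rintro (rfl | ⟨h1, h2, h3⟩ | ⟨⟨h1, h2⟩, h3⟩)
        · exact ⟨hji, hθi⟩
        · exact ⟨h1, h3⟩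
        · exact ⟨h1, h2⟩
    have hdisj : Disjoint (F i) (Ff.filter (fun k => i < k)) := by
      rw [Finset.disjoint_left]
      intro k hk1 hk2
      exact absurd (Finset.mem_filter.mp hk2).2 (not_lt.mpr ((hFmem i k).mp hk1).2.1.le)
    have hinotin : i ∉ F i ∪ Ff.filter (fun k => i < k) := by
      simp only [Finset.mem_union, Finset.mem_filter, not_or, not_and]
      exact ⟨hiFi i, fun _ => lt_irrefl i⟩
    rw [hsplit, Finset.sum_insert hinotin, Finset.sum_union hdisj]
    have hrest : ∑ k ∈ Ff.filter (fun k => i < k), φ j k * (w i k - θ k) = 0 := by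
      refine Finset.sum_eq_zero fun k hk => ?_
      have hk' := Finset.mem_filter.mp hk
      have hki : i < k := hk'.2
      have hmem := (hFfmem k).mp hk'.1
      rw [hwsupp i k hmem.1.ne'
        (fun h => absurd ((hFmem i k).mp h).2.1 (lt_asymm hki)) hki.ne']
      ring
    have hφi : φ j i = (u j - θ j) * ∏ k ∈ F i, (u k + 1 - θ k) := by
      rw [hφ, hF]
    have hmain : ∑ k ∈ F i, φ j k * (w i k - θ k) = φ j i - (u j - θ j) := by
      have tele := telescope_aux (fun k => u k + 1 - θ k) (u j - θ j) (F i)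
      have hterm : ∀ k ∈ F i, φ j k * (w i k - θ k)
          = ((u j - θ j) * ∏ k' ∈ (F i).filter (· < k), (u k' + 1 - θ k'))
            * ((u k + 1 - θ k) - 1) := by
        intro k hk
        have hki : k < i := ((hFmem i k).mp hk).2.1
        have hFk : (F i).filter (· < k) = F k := by
          ext x
          simp only [Finset.mem_filter, hFmem]
          constructor
          · rintro ⟨⟨a1, _, a3⟩, a4⟩; exact ⟨a1, a4, a3⟩
          · rintro ⟨a1, a2, a3⟩; exact ⟨⟨a1, a2.trans hki, a3⟩, a2⟩
        have hφk : φ j k = (u j - θ j) * ∏ k' ∈ F k, (u k' + 1 - θ k') := by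
          rw [hφ, hF]
        rw [hwF i k hk, hφk, hFk]
        ring
      calc ∑ k ∈ F i, φ j k * (w i k - θ k)
          = ∑ k ∈ F i, ((u j - θ j) * ∏ k' ∈ (F i).filter (· < k), (u k' + 1 - θ k'))
            * ((u k + 1 - θ k) - 1) := Finset.sum_congr rfl hterm
        _ = φ j i - (u j - θ j) := by rw [hφi]; linarith [tele]
    rw [hwj, hwi i hji, hmain, hrest]
    ring
  -- p branch lemmas
  have hpj : ∀ k, p j k = θ k := fun k => by rw [hp]; simp
  have hpFf : ∀ m, j < m → 1 ≤ θ m → ∀ k, p m k = w m k := by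
    intro m h1 h2 k
    rw [hp, if_neg h1.ne', if_neg (by omega : ¬ θ m ≤ 0), if_pos h1]
  have hplt : ∀ m, m < j → 1 ≤ θ m → ∀ k,
      p m k = if k = m then θ m - 1 else θ k := by
    intro m h1 h2 k
    rw [hp, if_neg h1.ne, if_neg (by omega : ¬ θ m ≤ 0), if_neg (not_lt.mpr h1.le)]
  -- bounds
  have hpbd : ∀ m k, 0 ≤ p m k ∧ p m k ≤ u k := by
    intro m k
    by_cases h1 : m = j
    · rw [h1, hpj]; exact ⟨hθ0 k, hθle k⟩
    by_cases h2 : θ m = 0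
    · rw [hpzero_eq m h1 h2]
      by_cases hk : k = m
      · subst hk
        rw [if_pos rfl, hwLm k h1 h2, h2]
        exact ⟨by norm_num, by linarith [hu k]⟩
      · rw [if_neg hk, add_zero]
        exact hwbd L (by rw [hθL]; exact hu L) k
    have h2' : 1 ≤ θ m := by have := hθ0 m; omega
    by_cases h3 : j < m
    · rw [hpFf m h3 h2']; exact hwbd m h2' k
    · have h4 : m < j := lt_of_le_of_ne (not_lt.mp h3) h1
      rw [hplt m h4 h2']
      by_cases hk : k = m
      · subst hk; rw [if_pos rfl]
        exact ⟨by linarith, by linarith [hθle k]⟩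
      · rw [if_neg hk]; exact ⟨hθ0 k, hθle k⟩
  -- budget
  have hpbud : ∀ m, ∑ k, a k * p m k ≤ b := by
    intro m
    by_cases h1 : m = j
    · calc ∑ k, a k * p m k = ∑ k, a k * θ k :=
            Finset.sum_congr rfl (fun k _ => by rw [h1, hpj])
        _ ≤ b := htot
    by_cases h2 : θ m = 0
    · exact hbdg0 m h1 h2
    have h2' : 1 ≤ θ m := by have := hθ0 m; omega
    by_cases h3 : j < m
    · calc ∑ k, a k * p m k = ∑ k, a k * w m k :=
            Finset.sum_congr rfl (fun k _ => by rw [hpFf m h3 h2'])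
        _ ≤ b := hbdgF m h3 h2'
    · have h4 : m < j := lt_of_le_of_ne (not_lt.mp h3) h1
      have hsum : ∑ k, a k * p m k = ∑ k, a k * θ k - a m := by
        have hterm : ∀ k : Fin n, a k * p m k = a k * θ k - (if k = m then a k else 0) := by
          intro k
          rw [hplt m h4 h2' k]
          by_cases hk : k = m
          · subst hk; rw [if_pos rfl, if_pos rfl]; ring
          · rw [if_neg hk, if_neg hk]; ring
        rw [Finset.sum_congr rfl (fun k _ => hterm k), Finset.sum_sub_distrib,
          Finset.sum_ite_eq' Finset.univ m (fun k => a k), if_pos (Finset.mem_univ m)]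
      rw [hsum]
      have := ha m
      linarith
  -- packing equality
  have hpeq : ∀ m, p m j + ∑ i ∈ Ff, φ j i * (p m i - θ i) = θ j := by
    intro m
    by_cases h1 : m = j
    · rw [h1, hpj]
      have : ∑ i ∈ Ff, φ j i * (p j i - θ i) = 0 :=
        Finset.sum_eq_zero fun i _ => by rw [hpj]; ring
      rw [this, add_zero]
    by_cases h2 : θ m = 0
    · have hmFf : ∀ k ∈ Ff, k ≠ m := by
        intro k hk h
        subst h
        have := ((hFfmem k).mp hk).2; omega
      have hpm : ∀ k ∈ Ff, p m k = w L k := by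
        intro k hk
        rw [hpzero_eq m h1 h2 k, if_neg (hmFf k hk), add_zero]
      have hpmj : p m j = w L j := by
        rw [hpzero_eq m h1 h2 j, if_neg (fun h => h1 h.symm), add_zero]
      have hθLn : (1 : ℤ) ≤ θ L := by rw [hθL]; exact hu L
      calc p m j + ∑ i ∈ Ff, φ j i * (p m i - θ i)
          = w L j + ∑ i ∈ Ff, φ j i * (w L i - θ i) := by
            rw [hpmj]
            congr 1
            exact Finset.sum_congr rfl fun i hi => by rw [hpm i hi]
        _ = θ j := heqw L hjL hθLn
    have h2' : 1 ≤ θ m := by have := hθ0 m; omega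
    by_cases h3 : j < m
    · calc p m j + ∑ i ∈ Ff, φ j i * (p m i - θ i)
          = w m j + ∑ i ∈ Ff, φ j i * (w m i - θ i) := by
            rw [hpFf m h3 h2' j]
            congr 1
            exact Finset.sum_congr rfl fun i _ => by rw [hpFf m h3 h2' i]
        _ = θ j := heqw m h3 h2'
    · have h4 : m < j := lt_of_le_of_ne (not_lt.mp h3) h1
      have hpmj : p m j = θ j := by
        rw [hplt m h4 h2' j, if_neg h4.ne']
      have hzero : ∑ i ∈ Ff, φ j i * (p m i - θ i) = 0 := by
        refine Finset.sum_eq_zero fun i hi => ?_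
        have hij : i ≠ m := fun h => by
          subst h
          exact absurd (((hFfmem i).mp hi).1.trans h4) (lt_irrefl j)
        rw [hplt m h4 h2' i, if_neg hij]
        ring
      rw [hpmj, hzero, add_zero]
  -- supports for linear independence
  have hsupp1 : ∀ m0, m0 ∉ Ff → m0 ≠ j → ∀ m, m ≠ j → m ≠ m0 → p m m0 = θ m0 := by
    intro m0 h1 h2 m hm1 hm2
    by_cases hz : θ m = 0
    · rw [hpzero_eq m hm1 hz m0, if_neg (fun h => hm2 h.symm), add_zero]
      refine hwsupp L m0 h2 (fun h => h1 (hFsub L m0 h)) (fun h => h1 (h ▸ hLFf))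
    · have hz' : 1 ≤ θ m := by have := hθ0 m; omega
      by_cases h3 : j < m
      · rw [hpFf m h3 hz' m0]
        refine hwsupp m m0 h2 (fun h => h1 (hFsub m m0 h)) ?_
        intro h
        exact h1 (h ▸ (hFfmem m).mpr ⟨h3, hz'⟩)
      · have h4 : m < j := lt_of_le_of_ne (not_lt.mp h3) hm1
        rw [hplt m h4 hz' m0, if_neg (fun h => hm2 h.symm)]
  have hsupp2 : ∀ m0, m0 ∈ Ff → ∀ m, m ∈ Ff → m < m0 → p m m0 = θ m0 := by
    intro m0 hm0 m hm hlt
    obtain ⟨ha1, ha2⟩ := (hFfmem m).mp hm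
    obtain ⟨hb1, _⟩ := (hFfmem m0).mp hm0
    rw [hpFf m ha1 ha2 m0]
    refine hwsupp m m0 hb1.ne' ?_ hlt.ne'
    intro h
    exact absurd ((hFmem m m0).mp h).2.1 (lt_asymm hlt)
  -- affine independence
  have hpaff : AffineIndependent ℝ (fun m => toReal (p m)) := by
    rw [affineIndependent_iff_linearIndependent_vsub ℝ _ j, Fintype.linearIndependent_iff]
    intro g hg
    set G : Fin n → ℝ := fun m => if h : m = j then 0 else g ⟨m, h⟩ with hG
    have hGj : G j = 0 := by simp [hG]
    have hGval : ∀ (m : Fin n) (h : m ≠ j), G m = g ⟨m, h⟩ := by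
      intro m h; simp [hG, dif_neg h]
    have hsumk : ∀ k : Fin n,
        ∑ m : Fin n, G m * ((p m k : ℝ) - (θ k : ℝ)) = 0 := by
      intro k
      have h0 := congrFun hg k
      simp only [Finset.sum_apply, Pi.smul_apply, vsub_eq_sub, Pi.sub_apply, smul_eq_mul,
        toReal, Pi.zero_apply] at h0
      have hpjk : ∀ i : {x : Fin n // x ≠ j},
          g i * (((p i.val k : ℤ) : ℝ) - ((p j k : ℤ) : ℝ))
            = g i * (((p i.val k : ℤ) : ℝ) - ((θ k : ℤ) : ℝ)) := by
        intro i; rw [hpj]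
      rw [Finset.sum_congr rfl (fun i _ => hpjk i)] at h0
      calc ∑ m : Fin n, G m * ((p m k : ℝ) - (θ k : ℝ))
          = ∑ m ∈ Finset.univ.erase j, G m * ((p m k : ℝ) - (θ k : ℝ)) :=
            (Finset.sum_erase _ (by rw [hGj, zero_mul])).symm
        _ = ∑ i : {x : Fin n // x ≠ j}, G i.val * ((p i.val k : ℝ) - (θ k : ℝ)) :=
            Finset.sum_subtype _ (fun x => by simp [Finset.mem_erase]) _
        _ = ∑ i : {x : Fin n // x ≠ j}, g i * ((p i.val k : ℝ) - (θ k : ℝ)) :=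
            Finset.sum_congr rfl (fun i _ => by rw [hGval i.val i.2])
        _ = 0 := h0
    have ph1 : ∀ m0 : Fin n, m0 ≠ j → m0 ∉ Ff → G m0 = 0 := by
      intro m0 h1 h2
      have hk := hsumk m0
      rw [Finset.sum_eq_single m0
        (fun m _ hm => by
          by_cases hmj : m = j
          · subst hmj; rw [hGj, zero_mul]
          · rw [hsupp1 m0 h2 h1 m hmj hm]; ring)
        (fun h => absurd (Finset.mem_univ m0) h)] at hk
      have hd : ((p m0 m0 : ℤ) : ℝ) - ((θ m0 : ℤ) : ℝ) ≠ 0 := by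
        by_cases hz : θ m0 = 0
        · rw [hpzero_eq m0 h1 hz m0, if_pos rfl, hwLm m0 h1 hz, hz]
          norm_num
        · have h2' : 1 ≤ θ m0 := by have := hθ0 m0; omega
          have h3 : ¬ j < m0 := fun h => h2 ((hFfmem m0).mpr ⟨h, h2'⟩)
          have h4 : m0 < j := lt_of_le_of_ne (not_lt.mp h3) h1
          rw [hplt m0 h4 h2' m0, if_pos rfl]
          push_cast
          ring_nf
          norm_num
      exact (mul_eq_zero.mp hk).resolve_right hd
    have ph2 : ∀ t : ℕ, ∀ m0 : Fin n, m0 ∈ Ff → n ≤ m0.val + t → G m0 = 0 := by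
      intro t
      induction t with
      | zero => intro m0 _ h; exact absurd h (by have := m0.isLt; omega)
      | succ t iht =>
        intro m0 hm0 hle
        obtain ⟨hm0j, hθm0⟩ := (hFfmem m0).mp hm0
        have hk := hsumk m0
        rw [Finset.sum_eq_single m0
          (fun m _ hm => by
            by_cases hmj : m = j
            · subst hmj; rw [hGj, zero_mul]
            by_cases hmFf : m ∈ Ff
            · rcases lt_or_gt_of_ne hm with hlt | hgt
              · rw [hsupp2 m0 hm0 m hmFf hlt]; ring
              · rw [iht m hmFf (by have h5 := Fin.lt_def.mp hgt; omega), zero_mul]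
            · rw [ph1 m hmj hmFf, zero_mul])
          (fun h => absurd (Finset.mem_univ m0) h)] at hk
        have hd : ((p m0 m0 : ℤ) : ℝ) - ((θ m0 : ℤ) : ℝ) = -1 := by
          rw [hpFf m0 hm0j hθm0 m0, hwi m0 hm0j]
          push_cast
          ring
        rw [hd] at hk
        linarith
    intro i
    have hGi : G i.val = 0 := by
      by_cases hFf' : (i : Fin n) ∈ Ff
      · exact ph2 n i.val hFf' (by omega)
      · exact ph1 i.val i.2 hFf'
    rw [hGval i.val i.2] at hGi
    simpa using hGi
  refine ⟨p, fun m => ⟨fun i => hpbd m i, hpbud m⟩, hpaff, fun m => ?_⟩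
  rw [← hFf]
  exact hpeq m
end
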